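/- Let a > 1 be a real number and let N = ⌊a⌋ + 1. Then ∑_{k=0}^{N} 1/(a + k)² > 1/(4a). -/

import Mathlib

theorem partial_sum_inv_sq_gt (a : ℝ) (ha : 1 < a) :
    ∑ k ∈ Finset.range (⌊a⌋₊ + 1 + 1), 1 / (a + k) ^ 2 > 1 / (4 * a) := by
  have ha0 : 0 < a := by linarith
  set n := ⌊a⌋₊ + 1 + 1 with hn
  set f : ℕ → ℝ := fun k => 1 / (a + k) with hf
  have key : ∑ k ∈ Finset.range n, (f k - f (k + 1)) < ∑ k ∈ Finset.range n, 1 / (a + k) ^ 2 := by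
    apply Finset.sum_lt_sum_of_nonempty
    · exact Finset.nonempty_range_iff.mpr (by omega)
    · intro k _
      have hk : (0:ℝ) < a + k := by positivity
      have hk1 : (0:ℝ) < a + k + 1 := by linarith
      simp only [hf]
      push_cast
      rw [div_sub_div _ _ (ne_of_gt hk) (ne_of_gt (by linarith : (0:ℝ) < a + (k + 1)))]
      rw [div_lt_div_iff₀ (by nlinarith) (by positivity)]
      nlinarith
  rw [Finset.sum_range_sub' f n] at key
  have hna : a < (n : ℝ) := by
    have := Nat.lt_floor_add_one a
    push_cast [hn]
    push_cast at this
    linarith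
  have hfin : 1 / (4 * a) ≤ f 0 - f n := by
    simp only [hf, Nat.cast_zero, add_zero]
    have h1 : (0:ℝ) < a + n := by positivity
    rw [div_sub_div _ _ (ne_of_gt ha0) (ne_of_gt h1), div_le_div_iff₀ (by positivity) (by positivity)]
    nlinarith
  linarith
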